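/- Soundness and completeness of concurrent-monoid-with-boxes axioms for subsumption: for terms s, t, the interpretation of s is subsumed by that of t (there is a homomorphism from ⟦t⟧ to ⟦s⟧) if and only if s ≤ t is derivable from the bimonoid-with-boxes axioms together with the exchange law (s∥t)·(u∥v) ≤ (s·u)∥(t·v) and the box-elimination law [s] ≤ s. -/

import Mathlib

/-- A poset with boxes over an alphabet `A`. -/
structure PB (A : Type) : Type 1 where
  Ev : Type
  le : Ev → Ev → Prop
  le_refl : ∀ e, le e e
  le_trans : ∀ e f g, le e f → le f g → le e g
  le_antisymm : ∀ e f, le e f → le f e → e = f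
  lab : Ev → A
  boxes : Set (Set Ev)
  boxes_ne : ∀ B ∈ boxes, B.Nonempty

/-- A homomorphism of posets with boxes: a bijection preserving labels,
order and boxes. -/
structure Hom {A : Type} (P Q : PB A) where
  toFun : P.Ev → Q.Ev
  bij : Function.Bijective toFun
  lab_eq : ∀ e, Q.lab (toFun e) = P.lab e
  mono : ∀ e f, P.le e f → Q.le (toFun e) (toFun f)
  box_pres : ∀ B ∈ P.boxes, toFun '' B ∈ Q.boxes

/-- Order-reflecting homomorphism. -/
def Hom.OrdRefl {A : Type} {P Q : PB A} (φ : Hom P Q) : Prop :=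
  ∀ e f, Q.le (φ.toFun e) (φ.toFun f) → P.le e f

/-- Box-reflecting homomorphism. -/
def Hom.BoxRefl {A : Type} {P Q : PB A} (φ : Hom P Q) : Prop :=
  ∀ B : Set P.Ev, φ.toFun '' B ∈ Q.boxes → B ∈ P.boxes

/-- Isomorphism of posets with boxes. -/
def Iso {A : Type} (P Q : PB A) : Prop :=
  ∃ φ : Hom P Q, φ.OrdRefl ∧ φ.BoxRefl

/-- `Subsume P Q` means `P ⊑ Q` : there is a homomorphism from `Q` to `P`. -/
def Subsume {A : Type} (P Q : PB A) : Prop := Nonempty (Hom Q P)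

/-- The empty poset with boxes. -/
def onePB (A : Type) : PB A where
  Ev := PEmpty
  le := fun _ _ => True
  le_refl := fun e => trivial
  le_trans := fun _ _ _ _ _ => trivial
  le_antisymm := fun e => e.elim
  lab := fun e => e.elim
  boxes := ∅
  boxes_ne := fun _ h => absurd h (Set.notMem_empty _)

/-- The atomic poset with boxes, with a single event labelled `a`. -/
def atomPB {A : Type} (a : A) : PB A where
  Ev := PUnit
  le := fun _ _ => True
  le_refl := fun _ => trivial
  le_trans := fun _ _ _ _ _ => trivial
  le_antisymm := fun _ _ _ _ => rfl
  lab := fun _ => a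
  boxes := ∅
  boxes_ne := fun _ h => absurd h (Set.notMem_empty _)

/-- The order of a sequential composition on the disjoint union of events. -/
def seqLE {A : Type} (P Q : PB A) : P.Ev ⊕ Q.Ev → P.Ev ⊕ Q.Ev → Prop
  | .inl a, .inl b => P.le a b
  | .inr a, .inr b => Q.le a b
  | .inl _, .inr _ => True
  | .inr _, .inl _ => False

/-- Sequential composition of posets with boxes. -/
def seqPB {A : Type} (P Q : PB A) : PB A where
  Ev := P.Ev ⊕ Q.Ev
  le := seqLE P Q
  le_refl := fun e => by cases e <;> simp [seqLE, PB.le_refl]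
  le_trans := fun e f g hef hfg => by
    cases e <;> cases f <;> cases g <;>
      simp_all [seqLE] <;>
      first
        | exact P.le_trans _ _ _ hef hfg
        | exact Q.le_trans _ _ _ hef hfg
  le_antisymm := fun e f hef hfe => by
    cases e <;> cases f <;> simp_all [seqLE]
    · exact P.le_antisymm _ _ hef hfe
    · exact Q.le_antisymm _ _ hef hfe
  lab := Sum.elim P.lab Q.lab
  boxes := (Set.image Sum.inl '' P.boxes) ∪ (Set.image Sum.inr '' Q.boxes)
  boxes_ne := by
    rintro B (⟨C, hC, rfl⟩ | ⟨C, hC, rfl⟩)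
    · exact ((P.boxes_ne C hC).image _)
    · exact ((Q.boxes_ne C hC).image _)

/-- The order of a parallel composition on the disjoint union of events. -/
def parLE {A : Type} (P Q : PB A) : P.Ev ⊕ Q.Ev → P.Ev ⊕ Q.Ev → Prop
  | .inl a, .inl b => P.le a b
  | .inr a, .inr b => Q.le a b
  | .inl _, .inr _ => False
  | .inr _, .inl _ => False

/-- Parallel composition of posets with boxes. -/
def parPB {A : Type} (P Q : PB A) : PB A where
  Ev := P.Ev ⊕ Q.Ev
  le := parLE P Q
  le_refl := fun e => by cases e <;> simp [parLE, PB.le_refl]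
  le_trans := fun e f g hef hfg => by
    cases e <;> cases f <;> cases g <;>
      simp_all [parLE] <;>
      first
        | exact P.le_trans _ _ _ hef hfg
        | exact Q.le_trans _ _ _ hef hfg
  le_antisymm := fun e f hef hfe => by
    cases e <;> cases f <;> simp_all [parLE]
    · exact P.le_antisymm _ _ hef hfe
    · exact Q.le_antisymm _ _ hef hfe
  lab := Sum.elim P.lab Q.lab
  boxes := (Set.image Sum.inl '' P.boxes) ∪ (Set.image Sum.inr '' Q.boxes)
  boxes_ne := by
    rintro B (⟨C, hC, rfl⟩ | ⟨C, hC, rfl⟩)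
    · exact ((P.boxes_ne C hC).image _)
    · exact ((Q.boxes_ne C hC).image _)

/-- Boxing: add the full (nonempty) set of events as a box. -/
def boxPB {A : Type} (P : PB A) : PB A where
  Ev := P.Ev
  le := P.le
  le_refl := P.le_refl
  le_trans := P.le_trans
  le_antisymm := P.le_antisymm
  lab := P.lab
  boxes := P.boxes ∪ {B | B = Set.univ ∧ B.Nonempty}
  boxes_ne := by
    rintro B (hB | ⟨rfl, hne⟩)
    · exact P.boxes_ne B hB
    · exact hne

/-- Restriction of a poset with boxes to a subset of its events. -/
def restrictPB {A : Type} (P : PB A) (S : Set P.Ev) : PB A where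
  Ev := S
  le := fun x y => P.le x.1 y.1
  le_refl := fun x => P.le_refl x.1
  le_trans := fun x y z => P.le_trans x.1 y.1 z.1
  le_antisymm := fun x y h h' => Subtype.ext (P.le_antisymm _ _ h h')
  lab := fun x => P.lab x.1
  boxes := {B | Subtype.val '' B ∈ P.boxes}
  boxes_ne := fun B hB => by
    rcases P.boxes_ne _ hB with ⟨x, ⟨y, hy, rfl⟩⟩
    exact ⟨y, hy⟩

/-- Forbidden pattern P1 (the `N` pattern). -/
def hasP1 {A : Type} (P : PB A) : Prop :=
  ∃ e1 e2 e3 e4 : P.Ev,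
    P.le e1 e3 ∧ P.le e2 e3 ∧ P.le e2 e4 ∧
    ¬ P.le e1 e4 ∧ ¬ P.le e2 e1 ∧ ¬ P.le e4 e3

/-- Forbidden pattern P2 (overlapping non-nested boxes). -/
def hasP2 {A : Type} (P : PB A) : Prop :=
  ∃ (Bx Cx : Set P.Ev) (e1 e2 e3 : P.Ev),
    Bx ∈ P.boxes ∧ Cx ∈ P.boxes ∧
    e1 ∈ Bx \ Cx ∧ e2 ∈ Bx ∩ Cx ∧ e3 ∈ Cx \ Bx

/-- Forbidden pattern P3. -/
def hasP3 {A : Type} (P : PB A) : Prop :=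
  ∃ (Bx : Set P.Ev) (e1 e2 e3 : P.Ev),
    Bx ∈ P.boxes ∧ e1 ∉ Bx ∧ e2 ∈ Bx ∧ e3 ∈ Bx ∧
    P.le e1 e2 ∧ ¬ P.le e1 e3

/-- Forbidden pattern P4. -/
def hasP4 {A : Type} (P : PB A) : Prop :=
  ∃ (Bx : Set P.Ev) (e1 e2 e3 : P.Ev),
    Bx ∈ P.boxes ∧ e1 ∉ Bx ∧ e2 ∈ Bx ∧ e3 ∈ Bx ∧
    P.le e2 e1 ∧ ¬ P.le e3 e1

/-- A set of events is non-trivial if it is neither empty nor everything. -/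
def NonTrivial {A : Type} (P : PB A) (S : Set P.Ev) : Prop :=
  S ≠ ∅ ∧ S ≠ Set.univ

/-- A set of events is nested if every box is contained in it or disjoint from it. -/
def Nested {A : Type} (P : PB A) (S : Set P.Ev) : Prop :=
  ∀ B ∈ P.boxes, B ⊆ S ∨ B ∩ S = ∅

/-- A set of events is prefix if every event in it is below every event outside. -/
def IsPrefix {A : Type} (P : PB A) (S : Set P.Ev) : Prop :=
  ∀ e ∈ S, ∀ f ∉ S, P.le e f

/-- A set of events is isolated if its events are incomparable with outside events. -/
def Isolated {A : Type} (P : PB A) (S : Set P.Ev) : Prop :=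
  ∀ e ∈ S, ∀ f ∉ S, ¬ P.le e f ∧ ¬ P.le f e
/-- Series–parallel terms. -/
inductive Term (A : Type) : Type
  | one : Term A
  | atom (a : A) : Term A
  | seq (s t : Term A) : Term A
  | par (s t : Term A) : Term A
  | box (s : Term A) : Term A

/-- Interpretation of terms as posets with boxes. -/
def semT {A : Type} : Term A → PB A
  | .one => onePB A
  | .atom a => atomPB a
  | .seq s t => seqPB (semT s) (semT t)
  | .par s t => parPB (semT s) (semT t)
  | .box s => boxPB (semT s)

/-- Derivability in the equational theory of bimonoids with boxes. -/
inductive BimEq {A : Type} : Term A → Term A → Prop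
  | seq_assoc (s t u : Term A) : BimEq (.seq s (.seq t u)) (.seq (.seq s t) u)
  | par_assoc (s t u : Term A) : BimEq (.par s (.par t u)) (.par (.par s t) u)
  | par_comm (s t : Term A) : BimEq (.par s t) (.par t s)
  | seq_unit_l (s : Term A) : BimEq (.seq .one s) s
  | seq_unit_r (s : Term A) : BimEq (.seq s .one) s
  | par_unit (s : Term A) : BimEq (.par .one s) s
  | box_box (s : Term A) : BimEq (.box (.box s)) (.box s)
  | box_one : BimEq (.box .one) .one
  | refl (s : Term A) : BimEq s s
  | symm {s t : Term A} : BimEq s t → BimEq t s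
  | trans {s t u : Term A} : BimEq s t → BimEq t u → BimEq s u
  | seq_congr {s s' t t' : Term A} : BimEq s s' → BimEq t t' → BimEq (.seq s t) (.seq s' t')
  | par_congr {s s' t t' : Term A} : BimEq s s' → BimEq t t' → BimEq (.par s t) (.par s' t')
  | box_congr {s s' : Term A} : BimEq s s' → BimEq (.box s) (.box s')

/-- Derivability in the inequational theory of concurrent monoids with boxes:
bimonoid axioms (in both directions) together with exchange and box elimination. -/
inductive CMLe {A : Type} : Term A → Term A → Prop
  | of_eq {s t : Term A} : BimEq s t → CMLe s t
  | exchange (s t u v : Term A) :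
      CMLe (.seq (.par s t) (.par u v)) (.par (.seq s u) (.seq t v))
  | box_le (s : Term A) : CMLe (.box s) s
  | refl (s : Term A) : CMLe s s
  | trans {s t u : Term A} : CMLe s t → CMLe t u → CMLe s u
  | seq_congr {s s' t t' : Term A} : CMLe s s' → CMLe t t' → CMLe (.seq s t) (.seq s' t')
  | par_congr {s s' t t' : Term A} : CMLe s s' → CMLe t t' → CMLe (.par s t) (.par s' t')
  | box_congr {s s' : Term A} : CMLe s s' → CMLe (.box s) (.box s')

attribute [reducible] seqPB parPB boxPB onePB atomPB semT

namespace CMProof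
open Function Set

variable {A : Type}

/-- Identity homomorphism. -/
def Hom.id (P : PB A) : Hom P P where
  toFun := _root_.id
  bij := Function.bijective_id
  lab_eq := fun _ => rfl
  mono := fun _ _ h => h
  box_pres := fun B hB => by simpa using hB

/-- Composition of homomorphisms. -/
def _root_.Hom.comp {P Q R : PB A} (f : Hom P Q) (g : Hom Q R) : Hom P R where
  toFun := g.toFun ∘ f.toFun
  bij := g.bij.comp f.bij
  lab_eq := fun e => by simp [g.lab_eq, f.lab_eq]
  mono := fun e f' h => g.mono _ _ (f.mono _ _ h)
  box_pres := fun B hB => by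
    rw [Set.image_comp]
    exact g.box_pres _ (f.box_pres _ hB)

/-- A structural equivalence of posets with boxes. -/
structure PBEquiv (P Q : PB A) where
  f : P.Ev → Q.Ev
  g : Q.Ev → P.Ev
  gf : ∀ x, g (f x) = x
  fg : ∀ y, f (g y) = y
  lab : ∀ x, Q.lab (f x) = P.lab x
  le_iff : ∀ x y, P.le x y ↔ Q.le (f x) (f y)
  box_fwd : ∀ B ∈ P.boxes, f '' B ∈ Q.boxes
  box_bwd : ∀ C ∈ Q.boxes, g '' C ∈ P.boxes

namespace PBEquiv

theorem f_bij {P Q : PB A} (h : PBEquiv P Q) : Function.Bijective h.f :=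
  ⟨fun a b hab => by rw [← h.gf a, hab, h.gf], fun y => ⟨h.g y, h.fg y⟩⟩

theorem g_image_image {P Q : PB A} (h : PBEquiv P Q) (B : Set P.Ev) :
    h.g '' (h.f '' B) = B := by
  rw [← Set.image_comp]
  simp [Function.comp_def, h.gf]

theorem f_image_image {P Q : PB A} (h : PBEquiv P Q) (C : Set Q.Ev) :
    h.f '' (h.g '' C) = C := by
  rw [← Set.image_comp]
  simp [Function.comp_def, h.fg]

def refl (P : PB A) : PBEquiv P P where
  f := _root_.id
  g := _root_.id
  gf := fun _ => rfl
  fg := fun _ => rfl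
  lab := fun _ => rfl
  le_iff := fun _ _ => Iff.rfl
  box_fwd := fun B hB => by simpa using hB
  box_bwd := fun B hB => by simpa using hB

def symm {P Q : PB A} (h : PBEquiv P Q) : PBEquiv Q P where
  f := h.g
  g := h.f
  gf := h.fg
  fg := h.gf
  lab := fun x => by conv_rhs => rw [← h.fg x, h.lab]
  le_iff := fun x y => by
    conv_lhs => rw [← h.fg x, ← h.fg y, ← h.le_iff]
  box_fwd := h.box_bwd
  box_bwd := h.box_fwd

def trans {P Q R : PB A} (h1 : PBEquiv P Q) (h2 : PBEquiv Q R) : PBEquiv P R where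
  f := h2.f ∘ h1.f
  g := h1.g ∘ h2.g
  gf := fun x => by simp [h2.gf, h1.gf]
  fg := fun y => by simp [h1.fg, h2.fg]
  lab := fun x => by simp [h2.lab, h1.lab]
  le_iff := fun x y => by rw [h1.le_iff, h2.le_iff]; rfl
  box_fwd := fun B hB => by
    rw [Set.image_comp]; exact h2.box_fwd _ (h1.box_fwd B hB)
  box_bwd := fun C hC => by
    rw [Set.image_comp]; exact h1.box_bwd _ (h2.box_bwd C hC)

def toHom {P Q : PB A} (h : PBEquiv P Q) : Hom P Q where
  toFun := h.f
  bij := h.f_bij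
  lab_eq := h.lab
  mono := fun x y hxy => (h.le_iff x y).mp hxy
  box_pres := h.box_fwd

end PBEquiv
end CMProof

namespace CMProof
open Function Set
variable {A : Type}

@[simp] theorem seqLE_inl_inl {P Q : PB A} (a b : P.Ev) :
    seqLE P Q (.inl a) (.inl b) = P.le a b := rfl
@[simp] theorem seqLE_inr_inr {P Q : PB A} (a b : Q.Ev) :
    seqLE P Q (.inr a) (.inr b) = Q.le a b := rfl
@[simp] theorem seqLE_inl_inr {P Q : PB A} (a : P.Ev) (b : Q.Ev) :
    seqLE P Q (.inl a) (.inr b) = True := rfl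
@[simp] theorem seqLE_inr_inl {P Q : PB A} (b : Q.Ev) (a : P.Ev) :
    seqLE P Q (.inr b) (.inl a) = False := rfl
@[simp] theorem parLE_inl_inl {P Q : PB A} (a b : P.Ev) :
    parLE P Q (.inl a) (.inl b) = P.le a b := rfl
@[simp] theorem parLE_inr_inr {P Q : PB A} (a b : Q.Ev) :
    parLE P Q (.inr a) (.inr b) = Q.le a b := rfl
@[simp] theorem parLE_inl_inr {P Q : PB A} (a : P.Ev) (b : Q.Ev) :
    parLE P Q (.inl a) (.inr b) = False := rfl
@[simp] theorem parLE_inr_inl {P Q : PB A} (b : Q.Ev) (a : P.Ev) :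
    parLE P Q (.inr b) (.inl a) = False := rfl

@[simp] theorem seqPB_le {P Q : PB A} : (seqPB P Q).le = seqLE P Q := rfl
@[simp] theorem parPB_le {P Q : PB A} : (parPB P Q).le = parLE P Q := rfl
@[simp] theorem seqPB_lab {P Q : PB A} : (seqPB P Q).lab = Sum.elim P.lab Q.lab := rfl
@[simp] theorem parPB_lab {P Q : PB A} : (parPB P Q).lab = Sum.elim P.lab Q.lab := rfl
@[simp] theorem seqPB_boxes {P Q : PB A} :
    (seqPB P Q).boxes = (Set.image Sum.inl '' P.boxes) ∪ (Set.image Sum.inr '' Q.boxes) := rfl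
@[simp] theorem parPB_boxes {P Q : PB A} :
    (parPB P Q).boxes = (Set.image Sum.inl '' P.boxes) ∪ (Set.image Sum.inr '' Q.boxes) := rfl
@[simp] theorem boxPB_le {P : PB A} : (boxPB P).le = P.le := rfl
@[simp] theorem boxPB_lab {P : PB A} : (boxPB P).lab = P.lab := rfl
@[simp] theorem boxPB_boxes {P : PB A} :
    (boxPB P).boxes = P.boxes ∪ {B | B = Set.univ ∧ B.Nonempty} := rfl

namespace PBEquiv

def seqCongr {P P' Q Q' : PB A} (h1 : PBEquiv P P') (h2 : PBEquiv Q Q') :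
    PBEquiv (seqPB P Q) (seqPB P' Q') where
  f := Sum.map h1.f h2.f
  g := Sum.map h1.g h2.g
  gf := fun x => by rcases x with x | x <;> simp [h1.gf, h2.gf]
  fg := fun x => by rcases x with x | x <;> simp [h1.fg, h2.fg]
  lab := fun x => by rcases x with x | x <;> simp [h1.lab, h2.lab]
  le_iff := fun x y => by
    rcases x with x | x <;> rcases y with y | y <;> simp [h1.le_iff, h2.le_iff]
  box_fwd := by
    rintro B (⟨C, hC, rfl⟩ | ⟨C, hC, rfl⟩)
    · exact Or.inl ⟨h1.f '' C, h1.box_fwd C hC, by simp [Set.image_image]⟩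
    · exact Or.inr ⟨h2.f '' C, h2.box_fwd C hC, by simp [Set.image_image]⟩
  box_bwd := by
    rintro B (⟨C, hC, rfl⟩ | ⟨C, hC, rfl⟩)
    · exact Or.inl ⟨h1.g '' C, h1.box_bwd C hC, by simp [Set.image_image]⟩
    · exact Or.inr ⟨h2.g '' C, h2.box_bwd C hC, by simp [Set.image_image]⟩

def parCongr {P P' Q Q' : PB A} (h1 : PBEquiv P P') (h2 : PBEquiv Q Q') :
    PBEquiv (parPB P Q) (parPB P' Q') where
  f := Sum.map h1.f h2.f
  g := Sum.map h1.g h2.g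
  gf := fun x => by rcases x with x | x <;> simp [h1.gf, h2.gf]
  fg := fun x => by rcases x with x | x <;> simp [h1.fg, h2.fg]
  lab := fun x => by rcases x with x | x <;> simp [h1.lab, h2.lab]
  le_iff := fun x y => by
    rcases x with x | x <;> rcases y with y | y <;> simp [h1.le_iff, h2.le_iff]
  box_fwd := by
    rintro B (⟨C, hC, rfl⟩ | ⟨C, hC, rfl⟩)
    · exact Or.inl ⟨h1.f '' C, h1.box_fwd C hC, by simp [Set.image_image]⟩
    · exact Or.inr ⟨h2.f '' C, h2.box_fwd C hC, by simp [Set.image_image]⟩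
  box_bwd := by
    rintro B (⟨C, hC, rfl⟩ | ⟨C, hC, rfl⟩)
    · exact Or.inl ⟨h1.g '' C, h1.box_bwd C hC, by simp [Set.image_image]⟩
    · exact Or.inr ⟨h2.g '' C, h2.box_bwd C hC, by simp [Set.image_image]⟩

def boxCongr {P P' : PB A} (h : PBEquiv P P') : PBEquiv (boxPB P) (boxPB P') where
  f := h.f
  g := h.g
  gf := h.gf
  fg := h.fg
  lab := h.lab
  le_iff := h.le_iff
  box_fwd := by
    rintro B (hB | ⟨rfl, hne⟩)
    · exact Or.inl (h.box_fwd B hB)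
    · exact Or.inr ⟨by rw [Set.image_univ, Set.range_eq_univ.mpr h.f_bij.2], hne.image _⟩
  box_bwd := by
    rintro B (hB | ⟨rfl, hne⟩)
    · exact Or.inl (h.box_bwd B hB)
    · exact Or.inr ⟨by rw [Set.image_univ, Set.range_eq_univ.mpr (fun y => ⟨h.f y, h.gf y⟩)], hne.image _⟩

end PBEquiv
end CMProof

namespace CMProof
open Function Set
variable {A : Type}
namespace PBEquiv

def seqAssoc (P Q R : PB A) : PBEquiv (seqPB P (seqPB Q R)) (seqPB (seqPB P Q) R) where
  f := fun x => match x with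
    | .inl a => .inl (.inl a) | .inr (.inl b) => .inl (.inr b) | .inr (.inr c) => .inr c
  g := fun x => match x with
    | .inl (.inl a) => .inl a | .inl (.inr b) => .inr (.inl b) | .inr c => .inr (.inr c)
  gf := fun x => by rcases x with a | (b | c) <;> rfl
  fg := fun x => by rcases x with (a | b) | c <;> rfl
  lab := fun x => by rcases x with a | (b | c) <;> rfl
  le_iff := fun x y => by
    rcases x with a | (b | c) <;> rcases y with a' | (b' | c') <;> exact Iff.rfl
  box_fwd := by
    rintro B (⟨C, hC, rfl⟩ | ⟨_, (⟨C, hC, rfl⟩ | ⟨C, hC, rfl⟩), rfl⟩)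
    · exact Or.inl ⟨Sum.inl '' C, Or.inl ⟨C, hC, rfl⟩, by simp [Set.image_image]⟩
    · exact Or.inl ⟨Sum.inr '' C, Or.inr ⟨C, hC, rfl⟩, by simp [Set.image_image]⟩
    · exact Or.inr ⟨C, hC, by simp [Set.image_image]⟩
  box_bwd := by
    rintro B (⟨_, (⟨C, hC, rfl⟩ | ⟨C, hC, rfl⟩), rfl⟩ | ⟨C, hC, rfl⟩)
    · exact Or.inl ⟨C, hC, by simp [Set.image_image]⟩
    · exact Or.inr ⟨Sum.inl '' C, Or.inl ⟨C, hC, rfl⟩, by simp [Set.image_image]⟩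
    · exact Or.inr ⟨Sum.inr '' C, Or.inr ⟨C, hC, rfl⟩, by simp [Set.image_image]⟩

def parAssoc (P Q R : PB A) : PBEquiv (parPB P (parPB Q R)) (parPB (parPB P Q) R) where
  f := fun x => match x with
    | .inl a => .inl (.inl a) | .inr (.inl b) => .inl (.inr b) | .inr (.inr c) => .inr c
  g := fun x => match x with
    | .inl (.inl a) => .inl a | .inl (.inr b) => .inr (.inl b) | .inr c => .inr (.inr c)
  gf := fun x => by rcases x with a | (b | c) <;> rfl
  fg := fun x => by rcases x with (a | b) | c <;> rfl
  lab := fun x => by rcases x with a | (b | c) <;> rfl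
  le_iff := fun x y => by
    rcases x with a | (b | c) <;> rcases y with a' | (b' | c') <;> exact Iff.rfl
  box_fwd := by
    rintro B (⟨C, hC, rfl⟩ | ⟨_, (⟨C, hC, rfl⟩ | ⟨C, hC, rfl⟩), rfl⟩)
    · exact Or.inl ⟨Sum.inl '' C, Or.inl ⟨C, hC, rfl⟩, by simp [Set.image_image]⟩
    · exact Or.inl ⟨Sum.inr '' C, Or.inr ⟨C, hC, rfl⟩, by simp [Set.image_image]⟩
    · exact Or.inr ⟨C, hC, by simp [Set.image_image]⟩
  box_bwd := by
    rintro B (⟨_, (⟨C, hC, rfl⟩ | ⟨C, hC, rfl⟩), rfl⟩ | ⟨C, hC, rfl⟩)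
    · exact Or.inl ⟨C, hC, by simp [Set.image_image]⟩
    · exact Or.inr ⟨Sum.inl '' C, Or.inl ⟨C, hC, rfl⟩, by simp [Set.image_image]⟩
    · exact Or.inr ⟨Sum.inr '' C, Or.inr ⟨C, hC, rfl⟩, by simp [Set.image_image]⟩

def parComm (P Q : PB A) : PBEquiv (parPB P Q) (parPB Q P) where
  f := Sum.swap
  g := Sum.swap
  gf := fun x => by rcases x with a | b <;> rfl
  fg := fun x => by rcases x with a | b <;> rfl
  lab := fun x => by rcases x with a | b <;> rfl
  le_iff := fun x y => by rcases x with a | b <;> rcases y with a' | b' <;> simp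
  box_fwd := by
    rintro B (⟨C, hC, rfl⟩ | ⟨C, hC, rfl⟩)
    · exact Or.inr ⟨C, hC, by simp [Set.image_image, Sum.swap]⟩
    · exact Or.inl ⟨C, hC, by simp [Set.image_image, Sum.swap]⟩
  box_bwd := by
    rintro B (⟨C, hC, rfl⟩ | ⟨C, hC, rfl⟩)
    · exact Or.inr ⟨C, hC, by simp [Set.image_image, Sum.swap]⟩
    · exact Or.inl ⟨C, hC, by simp [Set.image_image, Sum.swap]⟩

def seqUnitL (P : PB A) : PBEquiv (seqPB (onePB A) P) P where
  f := Sum.elim (fun e => e.elim) _root_.id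
  g := Sum.inr
  gf := fun x => by rcases x with e | x; exact e.elim; rfl
  fg := fun _ => rfl
  lab := fun x => by rcases x with e | x; exact e.elim; rfl
  le_iff := fun x y => by
    rcases x with e | x; exact e.elim; rcases y with e | y; exact e.elim; exact Iff.rfl
  box_fwd := by
    rintro B (⟨C, hC, rfl⟩ | ⟨C, hC, rfl⟩)
    · exact absurd hC (Set.notMem_empty _)
    · simpa [Set.image_image] using hC
  box_bwd := fun C hC => Or.inr ⟨C, hC, rfl⟩

def seqUnitR (P : PB A) : PBEquiv (seqPB P (onePB A)) P where
  f := Sum.elim _root_.id (fun e => e.elim)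
  g := Sum.inl
  gf := fun x => by rcases x with x | e; rfl; exact e.elim
  fg := fun _ => rfl
  lab := fun x => by rcases x with x | e; rfl; exact e.elim
  le_iff := fun x y => by
    rcases x with x | e; rcases y with y | e; exact Iff.rfl; exact e.elim; exact e.elim
  box_fwd := by
    rintro B (⟨C, hC, rfl⟩ | ⟨C, hC, rfl⟩)
    · simpa [Set.image_image] using hC
    · exact absurd hC (Set.notMem_empty _)
  box_bwd := fun C hC => Or.inl ⟨C, hC, rfl⟩

def parUnit (P : PB A) : PBEquiv (parPB (onePB A) P) P where
  f := Sum.elim (fun e => e.elim) _root_.id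
  g := Sum.inr
  gf := fun x => by rcases x with e | x; exact e.elim; rfl
  fg := fun _ => rfl
  lab := fun x => by rcases x with e | x; exact e.elim; rfl
  le_iff := fun x y => by
    rcases x with e | x; exact e.elim; rcases y with e | y; exact e.elim; exact Iff.rfl
  box_fwd := by
    rintro B (⟨C, hC, rfl⟩ | ⟨C, hC, rfl⟩)
    · exact absurd hC (Set.notMem_empty _)
    · simpa [Set.image_image] using hC
  box_bwd := fun C hC => Or.inr ⟨C, hC, rfl⟩

def boxBox (P : PB A) : PBEquiv (boxPB (boxPB P)) (boxPB P) where
  f := _root_.id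
  g := _root_.id
  gf := fun _ => rfl
  fg := fun _ => rfl
  lab := fun _ => rfl
  le_iff := fun _ _ => Iff.rfl
  box_fwd := by
    rintro B ((hB | hU) | hU)
    · exact Or.inl (by simpa using hB)
    · exact Or.inr (by simpa using hU)
    · exact Or.inr (by simpa using hU)
  box_bwd := by
    rintro B (hB | hU)
    · exact Or.inl (Or.inl (by simpa using hB))
    · exact Or.inl (Or.inr (by simpa using hU))

def boxOne : PBEquiv (boxPB (onePB A)) (onePB A) where
  f := _root_.id
  g := _root_.id
  gf := fun _ => rfl
  fg := fun _ => rfl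
  lab := fun e => e.elim
  le_iff := fun _ _ => Iff.rfl
  box_fwd := by
    rintro B (hB | ⟨rfl, hne⟩)
    · exact absurd hB (Set.notMem_empty _)
    · obtain ⟨x, -⟩ := hne; exact x.elim
  box_bwd := fun C hC => absurd hC (Set.notMem_empty _)

end PBEquiv

theorem bimEq_equiv {s t : Term A} (h : BimEq s t) :
    Nonempty (PBEquiv (semT s) (semT t)) := by
  induction h with
  | seq_assoc s t u => exact ⟨PBEquiv.seqAssoc _ _ _⟩
  | par_assoc s t u => exact ⟨PBEquiv.parAssoc _ _ _⟩
  | par_comm s t => exact ⟨PBEquiv.parComm _ _⟩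
  | seq_unit_l s => exact ⟨PBEquiv.seqUnitL _⟩
  | seq_unit_r s => exact ⟨PBEquiv.seqUnitR _⟩
  | par_unit s => exact ⟨PBEquiv.parUnit _⟩
  | box_box s => exact ⟨PBEquiv.boxBox _⟩
  | box_one => exact ⟨PBEquiv.boxOne⟩
  | refl s => exact ⟨PBEquiv.refl _⟩
  | symm h ih => exact ih.map PBEquiv.symm
  | trans h1 h2 ih1 ih2 => exact ih1.elim fun a => ih2.elim fun b => ⟨a.trans b⟩
  | seq_congr h1 h2 ih1 ih2 => exact ih1.elim fun a => ih2.elim fun b => ⟨a.seqCongr b⟩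
  | par_congr h1 h2 ih1 ih2 => exact ih1.elim fun a => ih2.elim fun b => ⟨a.parCongr b⟩
  | box_congr h ih => exact ih.map PBEquiv.boxCongr

end CMProof

namespace CMProof
open Function Set
variable {A : Type}

def seqHom {P P' Q Q' : PB A} (h1 : Hom P P') (h2 : Hom Q Q') :
    Hom (seqPB P Q) (seqPB P' Q') where
  toFun := Sum.map h1.toFun h2.toFun
  bij := ⟨h1.bij.1.sumMap h2.bij.1, h1.bij.2.sumMap h2.bij.2⟩
  lab_eq := fun x => by rcases x with x | x <;> simp [h1.lab_eq, h2.lab_eq]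
  mono := fun x y hxy => by
    rcases x with x | x <;> rcases y with y | y <;> simp_all
    · exact h1.mono _ _ hxy
    · exact h2.mono _ _ hxy
  box_pres := by
    rintro B (⟨C, hC, rfl⟩ | ⟨C, hC, rfl⟩)
    · exact Or.inl ⟨h1.toFun '' C, h1.box_pres C hC, by simp [Set.image_image]⟩
    · exact Or.inr ⟨h2.toFun '' C, h2.box_pres C hC, by simp [Set.image_image]⟩

def parHom {P P' Q Q' : PB A} (h1 : Hom P P') (h2 : Hom Q Q') :
    Hom (parPB P Q) (parPB P' Q') where
  toFun := Sum.map h1.toFun h2.toFun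
  bij := ⟨h1.bij.1.sumMap h2.bij.1, h1.bij.2.sumMap h2.bij.2⟩
  lab_eq := fun x => by rcases x with x | x <;> simp [h1.lab_eq, h2.lab_eq]
  mono := fun x y hxy => by
    rcases x with x | x <;> rcases y with y | y <;> simp_all
    · exact h1.mono _ _ hxy
    · exact h2.mono _ _ hxy
  box_pres := by
    rintro B (⟨C, hC, rfl⟩ | ⟨C, hC, rfl⟩)
    · exact Or.inl ⟨h1.toFun '' C, h1.box_pres C hC, by simp [Set.image_image]⟩
    · exact Or.inr ⟨h2.toFun '' C, h2.box_pres C hC, by simp [Set.image_image]⟩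

def boxHom {P P' : PB A} (h : Hom P P') : Hom (boxPB P) (boxPB P') where
  toFun := h.toFun
  bij := h.bij
  lab_eq := h.lab_eq
  mono := h.mono
  box_pres := by
    rintro B (hB | ⟨rfl, hne⟩)
    · exact Or.inl (h.box_pres B hB)
    · exact Or.inr ⟨by rw [Set.image_univ, Set.range_eq_univ.mpr h.bij.2], hne.image _⟩

/-- The homomorphism witnessing box elimination: `⟦s⟧ → ⟦box s⟧`. -/
def boxLeHom (P : PB A) : Hom P (boxPB P) where
  toFun := _root_.id
  bij := Function.bijective_id
  lab_eq := fun _ => rfl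
  mono := fun _ _ h => h
  box_pres := fun B hB => Or.inl (by simpa using hB)

/-- The homomorphism witnessing the exchange law. -/
def exchangeHom (P Q R S : PB A) :
    Hom (parPB (seqPB P R) (seqPB Q S)) (seqPB (parPB P Q) (parPB R S)) where
  toFun := fun x => match x with
    | .inl (.inl a) => .inl (.inl a)
    | .inl (.inr c) => .inr (.inl c)
    | .inr (.inl b) => .inl (.inr b)
    | .inr (.inr d) => .inr (.inr d)
  bij := by
    have : Function.LeftInverse (fun x => match x with
        | Sum.inl (Sum.inl a) => Sum.inl (Sum.inl a)
        | Sum.inr (Sum.inl c) => Sum.inl (Sum.inr c)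
        | Sum.inl (Sum.inr b) => Sum.inr (Sum.inl b)
        | Sum.inr (Sum.inr d) => Sum.inr (Sum.inr d) : ((P.Ev ⊕ Q.Ev) ⊕ (R.Ev ⊕ S.Ev)) → ((P.Ev ⊕ R.Ev) ⊕ (Q.Ev ⊕ S.Ev)))
        (fun x => match x with
        | Sum.inl (Sum.inl a) => Sum.inl (Sum.inl a)
        | Sum.inl (Sum.inr c) => Sum.inr (Sum.inl c)
        | Sum.inr (Sum.inl b) => Sum.inl (Sum.inr b)
        | Sum.inr (Sum.inr d) => Sum.inr (Sum.inr d)) := by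
      rintro ((a | c) | (b | d)) <;> rfl
    have hr : Function.RightInverse (fun x => match x with
        | Sum.inl (Sum.inl a) => Sum.inl (Sum.inl a)
        | Sum.inr (Sum.inl c) => Sum.inl (Sum.inr c)
        | Sum.inl (Sum.inr b) => Sum.inr (Sum.inl b)
        | Sum.inr (Sum.inr d) => Sum.inr (Sum.inr d) : ((P.Ev ⊕ Q.Ev) ⊕ (R.Ev ⊕ S.Ev)) → ((P.Ev ⊕ R.Ev) ⊕ (Q.Ev ⊕ S.Ev)))
        (fun x => match x with
        | Sum.inl (Sum.inl a) => Sum.inl (Sum.inl a)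
        | Sum.inl (Sum.inr c) => Sum.inr (Sum.inl c)
        | Sum.inr (Sum.inl b) => Sum.inl (Sum.inr b)
        | Sum.inr (Sum.inr d) => Sum.inr (Sum.inr d)) := by
      rintro ((a | b) | (c | d)) <;> rfl
    exact ⟨this.injective, hr.surjective⟩
  lab_eq := fun x => by rcases x with (a | c) | (b | d) <;> rfl
  mono := fun x y hxy => by
    rcases x with (a | c) | (b | d) <;> rcases y with (a' | c') | (b' | d') <;> simp_all [seqLE, parLE]
  box_pres := by
    rintro B (⟨_, (⟨C, hC, rfl⟩ | ⟨C, hC, rfl⟩), rfl⟩ | ⟨_, (⟨C, hC, rfl⟩ | ⟨C, hC, rfl⟩), rfl⟩)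
    · exact Or.inl ⟨Sum.inl '' C, Or.inl ⟨C, hC, rfl⟩, by simp [Set.image_image]⟩
    · exact Or.inr ⟨Sum.inl '' C, Or.inl ⟨C, hC, rfl⟩, by simp [Set.image_image]⟩
    · exact Or.inl ⟨Sum.inr '' C, Or.inr ⟨C, hC, rfl⟩, by simp [Set.image_image]⟩
    · exact Or.inr ⟨Sum.inr '' C, Or.inr ⟨C, hC, rfl⟩, by simp [Set.image_image]⟩

/-- Soundness: derivable inequalities are subsumptions. -/
theorem soundness {s t : Term A} (h : CMLe s t) : Nonempty (Hom (semT t) (semT s)) := by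
  induction h with
  | of_eq h => exact (bimEq_equiv h).map fun e => e.symm.toHom
  | exchange s t u v => exact ⟨exchangeHom _ _ _ _⟩
  | box_le s => exact ⟨boxLeHom _⟩
  | refl s => exact ⟨Hom.id _⟩
  | trans h1 h2 ih1 ih2 => exact ih2.elim fun a => ih1.elim fun b => ⟨a.comp b⟩
  | seq_congr h1 h2 ih1 ih2 => exact ih1.elim fun a => ih2.elim fun b => ⟨seqHom a b⟩
  | par_congr h1 h2 ih1 ih2 => exact ih1.elim fun a => ih2.elim fun b => ⟨parHom a b⟩
  | box_congr h ih => exact ih.map boxHom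

end CMProof

namespace CMProof
open Function Set
variable {A : Type}

/-- A term with no events is provably equal to `1`. -/
theorem empty_one : ∀ (s : Term A), ((semT s).Ev → False) → BimEq s .one := by
  intro s
  induction s with
  | one => exact fun _ => BimEq.refl _
  | atom a => exact fun h => (h PUnit.unit).elim
  | seq u v ihu ihv =>
    intro h
    exact BimEq.trans
      (BimEq.seq_congr (ihu (fun x => h (Sum.inl x))) (ihv (fun x => h (Sum.inr x))))
      (BimEq.seq_unit_l _)
  | par u v ihu ihv =>
    intro h
    exact BimEq.trans
      (BimEq.par_congr (ihu (fun x => h (Sum.inl x))) (ihv (fun x => h (Sum.inr x))))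
      (BimEq.par_unit _)
  | box u ihu =>
    intro h
    exact BimEq.trans (BimEq.box_congr (ihu h)) BimEq.box_one

/-- A term with a single event labelled `a` is provably below `atom a`. -/
theorem single_atom {a : A} : ∀ (s : Term A) (e : (semT s).Ev),
    (∀ e', e' = e) → (semT s).lab e = a → CMLe s (.atom a) := by
  intro s
  induction s with
  | one => exact fun e => e.elim
  | atom b =>
    intro e hu hl
    have : b = a := hl
    subst this
    exact CMLe.refl _
  | seq u v ihu ihv =>
    rintro (x | y) hu hl
    · have hv : (semT v).Ev → False := fun y => by
        have := hu (Sum.inr y); exact absurd this (by simp)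
      have := ihu x (fun x' => Sum.inl_injective (hu (Sum.inl x'))) hl
      exact CMLe.trans
        (CMLe.of_eq (BimEq.trans (BimEq.seq_congr (BimEq.refl u) (empty_one v hv))
          (BimEq.seq_unit_r u))) this
    · have hv : (semT u).Ev → False := fun x => by
        have := hu (Sum.inl x); exact absurd this (by simp)
      have := ihv y (fun y' => Sum.inr_injective (hu (Sum.inr y'))) hl
      exact CMLe.trans
        (CMLe.of_eq (BimEq.trans (BimEq.seq_congr (empty_one u hv) (BimEq.refl v))
          (BimEq.seq_unit_l v))) this
  | par u v ihu ihv =>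
    rintro (x | y) hu hl
    · have hv : (semT v).Ev → False := fun y => by
        have := hu (Sum.inr y); exact absurd this (by simp)
      have := ihu x (fun x' => Sum.inl_injective (hu (Sum.inl x'))) hl
      exact CMLe.trans
        (CMLe.of_eq (BimEq.trans (BimEq.par_congr (BimEq.refl u) (empty_one v hv))
          (BimEq.trans (BimEq.par_comm u .one) (BimEq.par_unit u)))) this
    · have hv : (semT u).Ev → False := fun x => by
        have := hu (Sum.inl x); exact absurd this (by simp)
      have := ihv y (fun y' => Sum.inr_injective (hu (Sum.inr y'))) hl
      exact CMLe.trans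
        (CMLe.of_eq (BimEq.trans (BimEq.par_congr (empty_one u hv) (BimEq.refl v))
          (BimEq.par_unit v))) this
  | box u ihu =>
    intro e hu hl
    exact CMLe.trans (CMLe.box_le u) (ihu e hu hl)

/-- Size of a term. -/
def termSize : Term A → Nat
  | .one => 1
  | .atom _ => 1
  | .seq s t => termSize s + termSize t + 1
  | .par s t => termSize s + termSize t + 1
  | .box s => termSize s + 1

/-- If the universe is a box, the term is provably a boxed term (of smaller size). -/
theorem stripBox : ∀ (s : Term A), Set.univ ∈ (semT s).boxes →
    ∃ s₀, termSize s₀ < termSize s ∧ BimEq s (.box s₀) := by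
  intro s
  induction s with
  | one => rintro ⟨⟩
  | atom a => rintro ⟨⟩
  | seq u v ihu ihv =>
    rintro (⟨C, hC, hEq⟩ | ⟨C, hC, hEq⟩)
    · have hv : (semT v).Ev → False := fun y => by
        have : (Sum.inr y : (semT u).Ev ⊕ (semT v).Ev) ∈ Sum.inl '' C := hEq ▸ Set.mem_univ _
        obtain ⟨c, -, hc⟩ := this
        exact absurd hc (by simp)
      have hCu : C = Set.univ := by
        ext x
        simp only [Set.mem_univ, iff_true]
        have : (Sum.inl x : (semT u).Ev ⊕ (semT v).Ev) ∈ Sum.inl '' C := hEq ▸ Set.mem_univ _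
        obtain ⟨c, hc, hceq⟩ := this
        have : c = x := by simpa using hceq
        exact this ▸ hc
      obtain ⟨u₀, hlt, hbe⟩ := ihu (hCu ▸ hC)
      exact ⟨u₀, by simp [termSize] at *; omega,
        BimEq.trans (BimEq.seq_congr hbe (empty_one v hv))
          (BimEq.trans (BimEq.seq_unit_r _) (BimEq.refl _))⟩
    · have hu : (semT u).Ev → False := fun x => by
        have : (Sum.inl x : (semT u).Ev ⊕ (semT v).Ev) ∈ Sum.inr '' C := hEq ▸ Set.mem_univ _
        obtain ⟨c, -, hc⟩ := this
        exact absurd hc (by simp)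
      have hCv : C = Set.univ := by
        ext y
        simp only [Set.mem_univ, iff_true]
        have : (Sum.inr y : (semT u).Ev ⊕ (semT v).Ev) ∈ Sum.inr '' C := hEq ▸ Set.mem_univ _
        obtain ⟨c, hc, hceq⟩ := this
        have : c = y := by simpa using hceq
        exact this ▸ hc
      obtain ⟨v₀, hlt, hbe⟩ := ihv (hCv ▸ hC)
      exact ⟨v₀, by simp [termSize] at *; omega,
        BimEq.trans (BimEq.seq_congr (empty_one u hu) hbe) (BimEq.seq_unit_l _)⟩
  | par u v ihu ihv =>
    rintro (⟨C, hC, hEq⟩ | ⟨C, hC, hEq⟩)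
    · have hv : (semT v).Ev → False := fun y => by
        have : (Sum.inr y : (semT u).Ev ⊕ (semT v).Ev) ∈ Sum.inl '' C := hEq ▸ Set.mem_univ _
        obtain ⟨c, -, hc⟩ := this
        exact absurd hc (by simp)
      have hCu : C = Set.univ := by
        ext x
        simp only [Set.mem_univ, iff_true]
        have : (Sum.inl x : (semT u).Ev ⊕ (semT v).Ev) ∈ Sum.inl '' C := hEq ▸ Set.mem_univ _
        obtain ⟨c, hc, hceq⟩ := this
        have : c = x := by simpa using hceq
        exact this ▸ hc
      obtain ⟨u₀, hlt, hbe⟩ := ihu (hCu ▸ hC)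
      exact ⟨u₀, by simp [termSize] at *; omega,
        BimEq.trans (BimEq.par_congr hbe (empty_one v hv))
          (BimEq.trans (BimEq.par_comm _ _) (BimEq.par_unit _))⟩
    · have hu : (semT u).Ev → False := fun x => by
        have : (Sum.inl x : (semT u).Ev ⊕ (semT v).Ev) ∈ Sum.inr '' C := hEq ▸ Set.mem_univ _
        obtain ⟨c, -, hc⟩ := this
        exact absurd hc (by simp)
      have hCv : C = Set.univ := by
        ext y
        simp only [Set.mem_univ, iff_true]
        have : (Sum.inr y : (semT u).Ev ⊕ (semT v).Ev) ∈ Sum.inr '' C := hEq ▸ Set.mem_univ _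
        obtain ⟨c, hc, hceq⟩ := this
        have : c = y := by simpa using hceq
        exact this ▸ hc
      obtain ⟨v₀, hlt, hbe⟩ := ihv (hCv ▸ hC)
      exact ⟨v₀, by simp [termSize] at *; omega,
        BimEq.trans (BimEq.par_congr (empty_one u hu) hbe) (BimEq.par_unit _)⟩
  | box u ihu =>
    intro _
    exact ⟨u, by simp [termSize], BimEq.refl _⟩

end CMProof

namespace CMProof
open Function Set
variable {A : Type}

open Classical in
/-- Syntactic restriction of a term to a subset of its events. -/
noncomputable def restrT : (s : Term A) → Set (semT s).Ev → Term A
  | .one, _ => .one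
  | .atom a, X => if PUnit.unit ∈ X then .atom a else .one
  | .seq u v, X => .seq (restrT u (Sum.inl ⁻¹' X)) (restrT v (Sum.inr ⁻¹' X))
  | .par u v, X => .par (restrT u (Sum.inl ⁻¹' X)) (restrT v (Sum.inr ⁻¹' X))
  | .box u, X => if X = Set.univ then .box u else restrT u X

theorem restrT_univ : ∀ s : Term A, restrT s Set.univ = s := by
  intro s
  induction s with
  | one => rfl
  | atom a => simp [restrT]
  | seq u v ihu ihv => simp [restrT, Set.preimage_univ, ihu, ihv]
  | par u v ihu ihv => simp [restrT, Set.preimage_univ, ihu, ihv]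
  | box u ihu => simp [restrT]

/-- Witness that `Q` is the restriction of `P` to `X`. -/
structure Restr (P : PB A) (X : Set P.Ev) (Q : PB A) where
  ρ : Q.Ev → P.Ev
  inj : Function.Injective ρ
  rng : Set.range ρ = X
  le_iff : ∀ x y, Q.le x y ↔ P.le (ρ x) (ρ y)
  lab : ∀ x, P.lab (ρ x) = Q.lab x
  box_in : ∀ B ∈ P.boxes, B ⊆ X → ρ ⁻¹' B ∈ Q.boxes

/-- The restricted term has no events when `X = ∅`. -/
theorem Restr.empty_ev {P Q : PB A} (R : Restr P (∅ : Set P.Ev) Q) : Q.Ev → False :=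
  fun q => by
    have : R.ρ q ∈ Set.range R.ρ := ⟨q, rfl⟩
    rw [R.rng] at this
    exact this

theorem restrExists : ∀ (s : Term A) (X : Set (semT s).Ev),
    Nonempty (Restr (semT s) X (semT (restrT s X))) := by
  intro s
  induction s with
  | one =>
    intro X
    exact ⟨{ ρ := fun e => e.elim
             inj := fun a => a.elim
             rng := by ext e; exact e.elim
             le_iff := fun x y => by exact x.elim
             lab := fun x => x.elim
             box_in := fun B hB => absurd hB (Set.notMem_empty _) }⟩
  | atom a =>
    intro X
    by_cases h : PUnit.unit ∈ X
    · rw [show restrT (.atom a) X = .atom a from by simp [restrT, h]]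
      exact ⟨{ ρ := _root_.id
               inj := fun x y hh => hh
               rng := by
                 ext u
                 rw [Set.mem_range]
                 constructor
                 · rintro ⟨y, rfl⟩; cases y; exact h
                 · intro _; exact ⟨u, rfl⟩
               le_iff := fun x y => Iff.rfl
               lab := fun x => rfl
               box_in := fun B hB => absurd hB (Set.notMem_empty _) }⟩
    · rw [show restrT (.atom a) X = .one from by simp [restrT, h]]
      exact ⟨{ ρ := fun e => e.elim
               inj := fun a' => a'.elim
               rng := by
                 ext u
                 rw [Set.mem_range]
                 constructor
                 · rintro ⟨y, rfl⟩; exact y.elim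
                 · intro hu; cases u; exact absurd hu h
               le_iff := fun x y => x.elim
               lab := fun x => x.elim
               box_in := fun B hB => absurd hB (Set.notMem_empty _) }⟩
  | seq u v ihu ihv =>
    intro X
    obtain ⟨Ru⟩ := ihu (Sum.inl ⁻¹' X)
    obtain ⟨Rv⟩ := ihv (Sum.inr ⁻¹' X)
    refine ⟨{ ρ := Sum.map Ru.ρ Rv.ρ
              inj := Ru.inj.sumMap Rv.inj
              rng := ?_
              le_iff := fun x y => ?_
              lab := fun x => ?_
              box_in := ?_ }⟩
    · ext z
      constructor
      · rintro ⟨w, rfl⟩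
        rcases w with a | b
        · exact (show Ru.ρ a ∈ Sum.inl ⁻¹' X from by
            have h0 : Ru.ρ a ∈ Set.range Ru.ρ := ⟨a, rfl⟩
            rw [Ru.rng] at h0; exact h0)
        · exact (show Rv.ρ b ∈ Sum.inr ⁻¹' X from by
            have h0 : Rv.ρ b ∈ Set.range Rv.ρ := ⟨b, rfl⟩
            rw [Rv.rng] at h0; exact h0)
      · intro hz
        rcases z with x | y
        · obtain ⟨a, rfl⟩ : x ∈ Set.range Ru.ρ := by rw [Ru.rng]; exact hz
          exact ⟨Sum.inl a, rfl⟩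
        · obtain ⟨b, rfl⟩ : y ∈ Set.range Rv.ρ := by rw [Rv.rng]; exact hz
          exact ⟨Sum.inr b, rfl⟩
    · rcases x with x | x <;> rcases y with y | y
      · exact Ru.le_iff x y
      · exact Iff.rfl
      · exact Iff.rfl
      · exact Rv.le_iff x y
    · rcases x with x | x
      · exact Ru.lab x
      · exact Rv.lab x
    · rintro B (⟨C, hC, rfl⟩ | ⟨C, hC, rfl⟩) hsub
      · have hCX : C ⊆ Sum.inl ⁻¹' X := fun c hc => hsub ⟨c, hc, rfl⟩
        refine Or.inl ⟨Ru.ρ ⁻¹' C, Ru.box_in C hC hCX, ?_⟩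
        ext z
        constructor
        · rintro ⟨a, ha, rfl⟩
          exact ⟨Ru.ρ a, ha, rfl⟩
        · intro hz
          rcases z with a | b
          · obtain ⟨c, hc, heq⟩ := hz
            have heq' : Sum.inl c = Sum.inl (Ru.ρ a) := heq
            exact ⟨a, show Ru.ρ a ∈ C from (Sum.inl_injective heq') ▸ hc, rfl⟩
          · obtain ⟨c, hc, heq⟩ := hz
            have heq' : Sum.inl c = Sum.inr (Rv.ρ b) := heq
            exact absurd heq' (by simp)
      · have hCX : C ⊆ Sum.inr ⁻¹' X := fun c hc => hsub ⟨c, hc, rfl⟩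
        refine Or.inr ⟨Rv.ρ ⁻¹' C, Rv.box_in C hC hCX, ?_⟩
        ext z
        constructor
        · rintro ⟨a, ha, rfl⟩
          exact ⟨Rv.ρ a, ha, rfl⟩
        · intro hz
          rcases z with a | b
          · obtain ⟨c, hc, heq⟩ := hz
            have heq' : Sum.inr c = Sum.inl (Ru.ρ a) := heq
            exact absurd heq' (by simp)
          · obtain ⟨c, hc, heq⟩ := hz
            have heq' : Sum.inr c = Sum.inr (Rv.ρ b) := heq
            exact ⟨b, show Rv.ρ b ∈ C from (Sum.inr_injective heq') ▸ hc, rfl⟩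
  | par u v ihu ihv =>
    intro X
    obtain ⟨Ru⟩ := ihu (Sum.inl ⁻¹' X)
    obtain ⟨Rv⟩ := ihv (Sum.inr ⁻¹' X)
    refine ⟨{ ρ := Sum.map Ru.ρ Rv.ρ
              inj := Ru.inj.sumMap Rv.inj
              rng := ?_
              le_iff := fun x y => ?_
              lab := fun x => ?_
              box_in := ?_ }⟩
    · ext z
      constructor
      · rintro ⟨w, rfl⟩
        rcases w with a | b
        · exact (show Ru.ρ a ∈ Sum.inl ⁻¹' X from by
            have h0 : Ru.ρ a ∈ Set.range Ru.ρ := ⟨a, rfl⟩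
            rw [Ru.rng] at h0; exact h0)
        · exact (show Rv.ρ b ∈ Sum.inr ⁻¹' X from by
            have h0 : Rv.ρ b ∈ Set.range Rv.ρ := ⟨b, rfl⟩
            rw [Rv.rng] at h0; exact h0)
      · intro hz
        rcases z with x | y
        · obtain ⟨a, rfl⟩ : x ∈ Set.range Ru.ρ := by rw [Ru.rng]; exact hz
          exact ⟨Sum.inl a, rfl⟩
        · obtain ⟨b, rfl⟩ : y ∈ Set.range Rv.ρ := by rw [Rv.rng]; exact hz
          exact ⟨Sum.inr b, rfl⟩
    · rcases x with x | x <;> rcases y with y | y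
      · exact Ru.le_iff x y
      · exact Iff.rfl
      · exact Iff.rfl
      · exact Rv.le_iff x y
    · rcases x with x | x
      · exact Ru.lab x
      · exact Rv.lab x
    · rintro B (⟨C, hC, rfl⟩ | ⟨C, hC, rfl⟩) hsub
      · have hCX : C ⊆ Sum.inl ⁻¹' X := fun c hc => hsub ⟨c, hc, rfl⟩
        refine Or.inl ⟨Ru.ρ ⁻¹' C, Ru.box_in C hC hCX, ?_⟩
        ext z
        constructor
        · rintro ⟨a, ha, rfl⟩
          exact ⟨Ru.ρ a, ha, rfl⟩
        · intro hz
          rcases z with a | b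
          · obtain ⟨c, hc, heq⟩ := hz
            have heq' : Sum.inl c = Sum.inl (Ru.ρ a) := heq
            exact ⟨a, show Ru.ρ a ∈ C from (Sum.inl_injective heq') ▸ hc, rfl⟩
          · obtain ⟨c, hc, heq⟩ := hz
            have heq' : Sum.inl c = Sum.inr (Rv.ρ b) := heq
            exact absurd heq' (by simp)
      · have hCX : C ⊆ Sum.inr ⁻¹' X := fun c hc => hsub ⟨c, hc, rfl⟩
        refine Or.inr ⟨Rv.ρ ⁻¹' C, Rv.box_in C hC hCX, ?_⟩
        ext z
        constructor
        · rintro ⟨a, ha, rfl⟩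
          exact ⟨Rv.ρ a, ha, rfl⟩
        · intro hz
          rcases z with a | b
          · obtain ⟨c, hc, heq⟩ := hz
            have heq' : Sum.inr c = Sum.inl (Ru.ρ a) := heq
            exact absurd heq' (by simp)
          · obtain ⟨c, hc, heq⟩ := hz
            have heq' : Sum.inr c = Sum.inr (Rv.ρ b) := heq
            exact ⟨b, show Rv.ρ b ∈ C from (Sum.inr_injective heq') ▸ hc, rfl⟩
  | box u ihu =>
    intro X
    by_cases hX : X = Set.univ
    · subst hX
      rw [show restrT (.box u) (Set.univ : Set (semT (.box u)).Ev) = .box u from by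
        simp [restrT]]
      exact ⟨{ ρ := _root_.id
               inj := fun a b hh => hh
               rng := Set.range_id
               le_iff := fun x y => Iff.rfl
               lab := fun x => rfl
               box_in := fun B hB _ => by simpa using hB }⟩
    · rw [show restrT (.box u) X = restrT u X from by simp [restrT, hX]]
      obtain ⟨R⟩ := ihu X
      exact ⟨{ ρ := R.ρ
               inj := R.inj
               rng := R.rng
               le_iff := R.le_iff
               lab := R.lab
               box_in := by
                 rintro B (hB | ⟨rfl, hne⟩) hsub
                 · exact R.box_in B hB hsub
                 · exact absurd (Set.univ_subset_iff.mp hsub) hX }⟩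

end CMProof

namespace CMProof
open Function Set
variable {A : Type}

/-- The medial/shuffle law for parallel composition, derivable from assoc+comm. -/
theorem parShuffle (a b c d : Term A) :
    BimEq (.par (.par a b) (.par c d)) (.par (.par a c) (.par b d)) := by
  have h1 : BimEq (.par (.par a b) (.par c d)) (.par a (.par b (.par c d))) :=
    BimEq.symm (BimEq.par_assoc a b (.par c d))
  have h2 : BimEq (Term.par b (.par c d)) (.par (.par b c) d) := BimEq.par_assoc b c d
  have h3 : BimEq (Term.par (.par b c) d) (.par (.par c b) d) :=
    BimEq.par_congr (BimEq.par_comm b c) (BimEq.refl d)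
  have h4 : BimEq (Term.par (.par c b) d) (.par c (.par b d)) :=
    BimEq.symm (BimEq.par_assoc c b d)
  have h5 : BimEq (Term.par a (.par c (.par b d))) (.par (.par a c) (.par b d)) :=
    BimEq.par_assoc a c (.par b d)
  exact BimEq.trans h1 (BimEq.trans
    (BimEq.par_congr (BimEq.refl a) (BimEq.trans h2 (BimEq.trans h3 h4))) h5)

theorem restr_empty_one (s : Term A) (X : Set (semT s).Ev) (hX : X = ∅) :
    BimEq (restrT s X) .one := by
  subst hX
  exact empty_one _ (fun q => (restrExists s ∅).some.empty_ev q)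

theorem restr_of_empty (s : Term A) (hs : (semT s).Ev → False) (X : Set (semT s).Ev) :
    BimEq (restrT s X) .one :=
  empty_one _ (fun q => hs ((restrExists s X).some.ρ q))

theorem restr_trivial_par (s : Term A) (X : Set (semT s).Ev) (hX : X = ∅ ∨ X = Set.univ) :
    CMLe s (.par (restrT s X) (restrT s Xᶜ)) := by
  rcases hX with rfl | rfl
  · rw [Set.compl_empty, restrT_univ]
    exact CMLe.of_eq (BimEq.symm (BimEq.trans
      (BimEq.par_congr (restr_empty_one s ∅ rfl) (BimEq.refl s)) (BimEq.par_unit s)))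
  · rw [Set.compl_univ, restrT_univ]
    exact CMLe.of_eq (BimEq.symm (BimEq.trans
      (BimEq.par_congr (BimEq.refl s) (restr_empty_one s ∅ rfl))
      (BimEq.trans (BimEq.par_comm s .one) (BimEq.par_unit s))))

theorem restr_trivial_seq (s : Term A) (X : Set (semT s).Ev) (hX : X = ∅ ∨ X = Set.univ) :
    CMLe s (.seq (restrT s X) (restrT s Xᶜ)) := by
  rcases hX with rfl | rfl
  · rw [Set.compl_empty, restrT_univ]
    exact CMLe.of_eq (BimEq.symm (BimEq.trans
      (BimEq.seq_congr (restr_empty_one s ∅ rfl) (BimEq.refl s)) (BimEq.seq_unit_l s)))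
  · rw [Set.compl_univ, restrT_univ]
    exact CMLe.of_eq (BimEq.symm (BimEq.trans
      (BimEq.seq_congr (BimEq.refl s) (restr_empty_one s ∅ rfl)) (BimEq.seq_unit_r s)))

theorem atom_set_trivial {a : A} (X : Set (semT (Term.atom a)).Ev) :
    X = ∅ ∨ X = Set.univ := by
  by_cases h : PUnit.unit ∈ X
  · right; ext z; cases z; simp [h]
  · left; ext z; cases z; simp [h]

/-- Restriction law for parallel: any split of the events is a derivable
parallel decomposition (uses the exchange law). -/
theorem L_par : ∀ (s : Term A) (X : Set (semT s).Ev),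
    CMLe s (.par (restrT s X) (restrT s Xᶜ)) := by
  intro s
  induction s with
  | one =>
    intro X
    exact restr_trivial_par _ X (Or.inl (by ext e; exact e.elim))
  | atom a =>
    intro X
    exact restr_trivial_par _ X (atom_set_trivial X)
  | seq u v ihu ihv =>
    intro X
    simp only [restrT]
    exact CMLe.trans
      (CMLe.trans (CMLe.seq_congr (ihu (Sum.inl ⁻¹' X)) (ihv (Sum.inr ⁻¹' X)))
        (CMLe.exchange _ _ _ _))
      (CMLe.refl _)
  | par u v ihu ihv =>
    intro X
    simp only [restrT]
    exact CMLe.trans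
      (CMLe.trans (CMLe.par_congr (ihu (Sum.inl ⁻¹' X)) (ihv (Sum.inr ⁻¹' X)))
        (CMLe.of_eq (parShuffle _ _ _ _)))
      (CMLe.refl _)
  | box u ihu =>
    intro X
    by_cases hX0 : X = ∅
    · exact restr_trivial_par _ X (Or.inl hX0)
    by_cases hX1 : X = Set.univ
    · exact restr_trivial_par _ X (Or.inr hX1)
    have hXc : Xᶜ ≠ Set.univ := fun h => hX0 (by rw [← compl_compl X, h, Set.compl_univ])
    rw [show restrT (.box u) X = restrT u X from by simp [restrT, hX1],
        show restrT (.box u) Xᶜ = restrT u Xᶜ from by simp [restrT, hXc]]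
    exact CMLe.trans (CMLe.box_le u) (ihu X)

/-- Restriction law for sequential: a prefix split of the events is a derivable
sequential decomposition. -/
theorem L_seq : ∀ (s : Term A) (X : Set (semT s).Ev), IsPrefix (semT s) X →
    CMLe s (.seq (restrT s X) (restrT s Xᶜ)) := by
  intro s
  induction s with
  | one =>
    intro X _
    exact restr_trivial_seq _ X (Or.inl (by ext e; exact e.elim))
  | atom a =>
    intro X _
    exact restr_trivial_seq _ X (atom_set_trivial X)
  | seq u v ihu ihv =>
    intro X hpre
    by_cases hXv : Sum.inr ⁻¹' X = ∅
    · have hpu : IsPrefix (semT u) (Sum.inl ⁻¹' X) := fun e he f hf =>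
        hpre (Sum.inl e) he (Sum.inl f) hf
      have hvc : Sum.inr ⁻¹' Xᶜ = (Set.univ : Set (semT v).Ev) := by
        have : Sum.inr ⁻¹' Xᶜ = (Sum.inr ⁻¹' X)ᶜ := rfl
        rw [this, hXv, Set.compl_empty]
      simp only [restrT]
      rw [hvc, restrT_univ]
      refine CMLe.trans (CMLe.seq_congr (ihu _ hpu) (CMLe.refl v)) (CMLe.of_eq ?_)
      refine BimEq.symm ?_
      refine BimEq.trans (BimEq.seq_congr
        (BimEq.trans (BimEq.seq_congr (BimEq.refl _) (restr_empty_one v _ hXv))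
          (BimEq.seq_unit_r _)) (BimEq.refl _)) ?_
      exact BimEq.seq_assoc _ _ _
    · obtain ⟨y0, hy0⟩ := Set.nonempty_iff_ne_empty.mpr hXv
      have hXu : Sum.inl ⁻¹' X = (Set.univ : Set (semT u).Ev) := by
        ext x
        simp only [Set.mem_univ, iff_true]
        by_contra hx
        exact hpre (Sum.inr y0) hy0 (Sum.inl x) hx
      have hpv : IsPrefix (semT v) (Sum.inr ⁻¹' X) := fun e he f hf =>
        hpre (Sum.inr e) he (Sum.inr f) hf
      have huc : Sum.inl ⁻¹' Xᶜ = (∅ : Set (semT u).Ev) := by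
        have : Sum.inl ⁻¹' Xᶜ = (Sum.inl ⁻¹' X)ᶜ := rfl
        rw [this, hXu, Set.compl_univ]
      simp only [restrT]
      rw [hXu, restrT_univ]
      refine CMLe.trans (CMLe.seq_congr (CMLe.refl u) (ihv _ hpv)) (CMLe.of_eq ?_)
      refine BimEq.symm ?_
      refine BimEq.trans (BimEq.seq_congr (BimEq.refl _)
        (BimEq.trans (BimEq.seq_congr (restr_empty_one u _ huc) (BimEq.refl _))
          (BimEq.seq_unit_l _))) ?_
      exact BimEq.symm (BimEq.seq_assoc _ _ _)
  | par u v ihu ihv =>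
    intro X hpre
    by_cases hX0 : X = ∅
    · exact restr_trivial_seq _ X (Or.inl hX0)
    by_cases hX1 : X = Set.univ
    · exact restr_trivial_seq _ X (Or.inr hX1)
    obtain ⟨z, hz⟩ := Set.nonempty_iff_ne_empty.mpr hX0
    obtain ⟨w, hw⟩ : ∃ w, w ∉ X := by
      by_contra hcon
      push_neg at hcon
      exact hX1 (Set.eq_univ_of_forall hcon)
    have hA1 : ∀ (x : (semT u).Ev) (y : (semT v).Ev),
        Sum.inl x ∈ X → Sum.inr y ∉ X → False := fun x y hx hy =>
      hpre (Sum.inl x) hx (Sum.inr y) hy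
    have hA2 : ∀ (x : (semT u).Ev) (y : (semT v).Ev),
        Sum.inr y ∈ X → Sum.inl x ∉ X → False := fun x y hy hx =>
      hpre (Sum.inr y) hy (Sum.inl x) hx
    rcases z with x | y <;> rcases w with x' | y'
    · -- v is empty
      have hv : (semT v).Ev → False := fun y => by
        by_cases hy : Sum.inr y ∈ X
        · exact hA2 x' y hy hw
        · exact hA1 x y hz hy
      have hpu : IsPrefix (semT u) (Sum.inl ⁻¹' X) := fun e he f hf =>
        hpre (Sum.inl e) he (Sum.inl f) hf
      simp only [restrT]
      have hu_le : CMLe (Term.par u v)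
          (.seq (restrT u (Sum.inl ⁻¹' X)) (restrT u (Sum.inl ⁻¹' X)ᶜ)) :=
        CMLe.trans (CMLe.of_eq (BimEq.trans
          (BimEq.par_congr (BimEq.refl u) (empty_one v hv))
          (BimEq.trans (BimEq.par_comm u .one) (BimEq.par_unit u)))) (ihu _ hpu)
      refine CMLe.trans hu_le (CMLe.of_eq (BimEq.symm ?_))
      exact BimEq.seq_congr
        (BimEq.trans (BimEq.par_congr (BimEq.refl _) (restr_of_empty v hv _))
          (BimEq.trans (BimEq.par_comm _ .one) (BimEq.par_unit _)))
        (BimEq.trans (BimEq.par_congr (BimEq.refl _) (restr_of_empty v hv _))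
          (BimEq.trans (BimEq.par_comm _ .one) (BimEq.par_unit _)))
    · exact (hA1 x y' hz hw).elim
    · exact (hA2 x' y hz hw).elim
    · -- u is empty
      have hu : (semT u).Ev → False := fun x => by
        by_cases hx : Sum.inl x ∈ X
        · exact hA1 x y' hx hw
        · exact hA2 x y hz hx
      have hpv : IsPrefix (semT v) (Sum.inr ⁻¹' X) := fun e he f hf =>
        hpre (Sum.inr e) he (Sum.inr f) hf
      simp only [restrT]
      have hv_le : CMLe (Term.par u v)
          (.seq (restrT v (Sum.inr ⁻¹' X)) (restrT v (Sum.inr ⁻¹' X)ᶜ)) :=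
        CMLe.trans (CMLe.of_eq (BimEq.trans
          (BimEq.par_congr (empty_one u hu) (BimEq.refl v)) (BimEq.par_unit v)))
          (ihv _ hpv)
      refine CMLe.trans hv_le (CMLe.of_eq (BimEq.symm ?_))
      exact BimEq.seq_congr
        (BimEq.trans (BimEq.par_congr (restr_of_empty u hu _) (BimEq.refl _))
          (BimEq.par_unit _))
        (BimEq.trans (BimEq.par_congr (restr_of_empty u hu _) (BimEq.refl _))
          (BimEq.par_unit _))
  | box u ihu =>
    intro X hpre
    by_cases hX0 : X = ∅
    · exact restr_trivial_seq _ X (Or.inl hX0)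
    by_cases hX1 : X = Set.univ
    · exact restr_trivial_seq _ X (Or.inr hX1)
    have hXc : Xᶜ ≠ Set.univ := fun h => hX0 (by rw [← compl_compl X, h, Set.compl_univ])
    rw [show restrT (.box u) X = restrT u X from by simp [restrT, hX1],
        show restrT (.box u) Xᶜ = restrT u Xᶜ from by simp [restrT, hXc]]
    exact CMLe.trans (CMLe.box_le u) (ihu X hpre)

end CMProof

namespace CMProof
open Function Set
variable {A : Type}

/-- Transport a homomorphism through a restriction witness. -/
theorem homToRestr {T P Q : PB A} {X : Set P.Ev} (R : Restr P X Q)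
    (f : T.Ev → P.Ev) (hinj : Function.Injective f) (hrange : Set.range f = X)
    (hlab : ∀ x, P.lab (f x) = T.lab x)
    (hmono : ∀ x y, T.le x y → P.le (f x) (f y))
    (hbox : ∀ B ∈ T.boxes, f '' B ∈ P.boxes) : Nonempty (Hom T Q) := by
  have hex : ∀ x : T.Ev, ∃ q : Q.Ev, R.ρ q = f x := by
    intro x
    have : f x ∈ Set.range R.ρ := by rw [R.rng, ← hrange]; exact ⟨x, rfl⟩
    exact this
  choose g hg using hex
  refine ⟨{ toFun := g, bij := ⟨?_, ?_⟩, lab_eq := ?_, mono := ?_, box_pres := ?_ }⟩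
  · intro a b hab
    apply hinj
    rw [← hg a, ← hg b, hab]
  · intro q
    have h0 : R.ρ q ∈ Set.range R.ρ := ⟨q, rfl⟩
    rw [R.rng] at h0
    have h1 : R.ρ q ∈ Set.range f := by rw [hrange]; exact h0
    obtain ⟨x, hx⟩ := h1
    exact ⟨x, R.inj (by rw [hg x, hx])⟩
  · intro x
    rw [← R.lab (g x), hg x, hlab x]
  · intro x y hxy
    apply (R.le_iff _ _).mpr
    rw [hg x, hg y]
    exact hmono x y hxy
  · intro B hB
    have himg : g '' B = R.ρ ⁻¹' (f '' B) := by
      ext q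
      constructor
      · rintro ⟨b, hb, rfl⟩
        exact (show R.ρ (g b) ∈ f '' B from by rw [hg b]; exact ⟨b, hb, rfl⟩)
      · intro hq
        obtain ⟨b, hb, heq⟩ := hq
        exact ⟨b, hb, R.inj (by rw [hg b, heq])⟩
    rw [himg]
    exact R.box_in _ (hbox B hB) (fun p => by
      rintro ⟨x, -, rfl⟩
      rw [← hrange]
      exact ⟨x, rfl⟩)

theorem termSize_pos (t : Term A) : 1 ≤ termSize t := by
  cases t <;> simp [termSize]

/-- Completeness, by strong induction on the size of the right-hand term. -/
theorem complete : ∀ (n : Nat) (t s : Term A), termSize t ≤ n →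
    Hom (semT t) (semT s) → CMLe s t := by
  intro n
  induction n with
  | zero =>
    intro t s ht _
    exact absurd (le_trans (termSize_pos t) ht) (by omega)
  | succ n ih =>
    intro t s ht φ
    cases t with
    | one =>
      refine CMLe.of_eq (empty_one s ?_)
      intro e
      obtain ⟨p, -⟩ := φ.bij.2 e
      exact p.elim
    | atom a =>
      refine single_atom s (φ.toFun PUnit.unit) ?_ (φ.lab_eq PUnit.unit)
      intro e'
      obtain ⟨p, hp⟩ := φ.bij.2 e'
      cases p
      exact hp.symm
    | box t' =>
      by_cases hne : Nonempty (semT t').Ev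
      · obtain ⟨w⟩ := hne
        have hunivbox : Set.univ ∈ (semT (.box t')).boxes :=
          Or.inr ⟨rfl, ⟨w, trivial⟩⟩
        by_cases htb : Set.univ ∈ (semT t').boxes
        · obtain ⟨t₀, hlt, hbe⟩ := stripBox t' htb
          have hbe2 : BimEq (.box t') (.box t₀) :=
            BimEq.trans (BimEq.box_congr hbe) (BimEq.box_box t₀)
          obtain ⟨E⟩ := bimEq_equiv hbe2
          have φ' : Hom (semT (.box t₀)) (semT s) := Hom.comp E.symm.toHom φ
          have hsz : termSize (Term.box t₀) ≤ n := by
            simp only [termSize] at ht ⊢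
            omega
          exact CMLe.trans (ih _ s hsz φ') (CMLe.of_eq (BimEq.symm hbe2))
        · have hsuniv : Set.univ ∈ (semT s).boxes := by
            have := φ.box_pres _ hunivbox
            rwa [Set.image_univ, Set.range_eq_univ.mpr φ.bij.2] at this
          obtain ⟨s₀, hslt, hsbe⟩ := stripBox s hsuniv
          obtain ⟨E⟩ := bimEq_equiv hsbe
          have φ2 : Hom (semT (.box t')) (semT (.box s₀)) := Hom.comp φ E.toHom
          have φ3 : Hom (semT t') (semT s₀) :=
            { toFun := φ2.toFun
              bij := φ2.bij
              lab_eq := φ2.lab_eq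
              mono := φ2.mono
              box_pres := by
                intro B hB
                have h2 := φ2.box_pres B (Or.inl hB)
                rcases h2 with h2 | ⟨hequ, hne2⟩
                · exact h2
                · exfalso
                  have hBuniv : B = Set.univ := by
                    ext y
                    simp only [Set.mem_univ, iff_true]
                    have : φ2.toFun y ∈ φ2.toFun '' B := hequ ▸ Set.mem_univ _
                    obtain ⟨b, hb, heq⟩ := this
                    exact (φ2.bij.1 heq) ▸ hb
                  exact htb (hBuniv ▸ hB) }
          have hsz : termSize t' ≤ n := by
            simp only [termSize] at ht
            omega
          exact CMLe.trans (CMLe.of_eq hsbe) (CMLe.box_congr (ih t' s₀ hsz φ3))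
      · have ht' : (semT t').Ev → False := fun p => hne ⟨p⟩
        have hs : (semT s).Ev → False := fun e => by
          obtain ⟨p, -⟩ := φ.bij.2 e
          exact ht' p
        refine CMLe.of_eq (BimEq.trans (empty_one s hs) (BimEq.symm ?_))
        exact BimEq.trans (BimEq.box_congr (empty_one t' ht')) BimEq.box_one
    | seq t1 t2 =>
      have hpre : IsPrefix (semT s)
          (Set.range (fun x : (semT t1).Ev => φ.toFun (Sum.inl x))) := by
        rintro e ⟨x, rfl⟩ f hf
        obtain ⟨z, rfl⟩ := φ.bij.2 f
        rcases z with x' | y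
        · exact absurd ⟨x', rfl⟩ hf
        · exact φ.mono (Sum.inl x) (Sum.inr y) trivial
      obtain ⟨R1⟩ := restrExists s (Set.range (fun x : (semT t1).Ev => φ.toFun (Sum.inl x)))
      obtain ⟨R2⟩ := restrExists s (Set.range (fun x : (semT t1).Ev => φ.toFun (Sum.inl x)))ᶜ
      have hrange2 : Set.range (fun y : (semT t2).Ev => φ.toFun (Sum.inr y)) =
          (Set.range (fun x : (semT t1).Ev => φ.toFun (Sum.inl x)))ᶜ := by
        ext p
        constructor
        · rintro ⟨y, rfl⟩ ⟨x, hx⟩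
          exact Sum.inl_ne_inr (φ.bij.1 hx)
        · intro hp
          obtain ⟨z, rfl⟩ := φ.bij.2 p
          rcases z with x | y
          · exact absurd ⟨x, rfl⟩ hp
          · exact ⟨y, rfl⟩
      obtain ⟨ψ1⟩ := homToRestr R1 (fun x => φ.toFun (Sum.inl x))
        (fun a b hab => Sum.inl_injective (φ.bij.1 hab)) rfl
        (fun x => φ.lab_eq (Sum.inl x))
        (fun x y hxy => φ.mono (Sum.inl x) (Sum.inl y) hxy)
        (fun B hB => by
          rw [show (fun x => φ.toFun (Sum.inl x)) '' B = φ.toFun '' (Sum.inl '' B) from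
            (Set.image_image _ _ _).symm]
          exact φ.box_pres _ (Or.inl ⟨B, hB, rfl⟩))
      obtain ⟨ψ2⟩ := homToRestr R2 (fun y => φ.toFun (Sum.inr y))
        (fun a b hab => Sum.inr_injective (φ.bij.1 hab)) hrange2
        (fun y => φ.lab_eq (Sum.inr y))
        (fun x y hxy => φ.mono (Sum.inr x) (Sum.inr y) hxy)
        (fun B hB => by
          rw [show (fun y => φ.toFun (Sum.inr y)) '' B = φ.toFun '' (Sum.inr '' B) from
            (Set.image_image _ _ _).symm]
          exact φ.box_pres _ (Or.inr ⟨B, hB, rfl⟩))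
      have hsz1 : termSize t1 ≤ n := by simp only [termSize] at ht; have := termSize_pos t2; omega
      have hsz2 : termSize t2 ≤ n := by simp only [termSize] at ht; have := termSize_pos t1; omega
      exact CMLe.trans (L_seq s _ hpre)
        (CMLe.seq_congr (ih t1 _ hsz1 ψ1) (ih t2 _ hsz2 ψ2))
    | par t1 t2 =>
      obtain ⟨R1⟩ := restrExists s (Set.range (fun x : (semT t1).Ev => φ.toFun (Sum.inl x)))
      obtain ⟨R2⟩ := restrExists s (Set.range (fun x : (semT t1).Ev => φ.toFun (Sum.inl x)))ᶜ
      have hrange2 : Set.range (fun y : (semT t2).Ev => φ.toFun (Sum.inr y)) =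
          (Set.range (fun x : (semT t1).Ev => φ.toFun (Sum.inl x)))ᶜ := by
        ext p
        constructor
        · rintro ⟨y, rfl⟩ ⟨x, hx⟩
          exact Sum.inl_ne_inr (φ.bij.1 hx)
        · intro hp
          obtain ⟨z, rfl⟩ := φ.bij.2 p
          rcases z with x | y
          · exact absurd ⟨x, rfl⟩ hp
          · exact ⟨y, rfl⟩
      obtain ⟨ψ1⟩ := homToRestr R1 (fun x => φ.toFun (Sum.inl x))
        (fun a b hab => Sum.inl_injective (φ.bij.1 hab)) rfl
        (fun x => φ.lab_eq (Sum.inl x))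
        (fun x y hxy => φ.mono (Sum.inl x) (Sum.inl y) hxy)
        (fun B hB => by
          rw [show (fun x => φ.toFun (Sum.inl x)) '' B = φ.toFun '' (Sum.inl '' B) from
            (Set.image_image _ _ _).symm]
          exact φ.box_pres _ (Or.inl ⟨B, hB, rfl⟩))
      obtain ⟨ψ2⟩ := homToRestr R2 (fun y => φ.toFun (Sum.inr y))
        (fun a b hab => Sum.inr_injective (φ.bij.1 hab)) hrange2
        (fun y => φ.lab_eq (Sum.inr y))
        (fun x y hxy => φ.mono (Sum.inr x) (Sum.inr y) hxy)
        (fun B hB => by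
          rw [show (fun y => φ.toFun (Sum.inr y)) '' B = φ.toFun '' (Sum.inr '' B) from
            (Set.image_image _ _ _).symm]
          exact φ.box_pres _ (Or.inr ⟨B, hB, rfl⟩))
      have hsz1 : termSize t1 ≤ n := by simp only [termSize] at ht; have := termSize_pos t2; omega
      have hsz2 : termSize t2 ≤ n := by simp only [termSize] at ht; have := termSize_pos t1; omega
      exact CMLe.trans (L_par s _)
        (CMLe.par_congr (ih t1 _ hsz1 ψ1) (ih t2 _ hsz2 ψ2))

end CMProof

/-- Soundness and completeness of the concurrent-monoid-with-boxes axioms for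
subsumption: `⟦s⟧ ⊑ ⟦t⟧` iff `s ≤ t` is derivable. -/
theorem concurrent_monoid_completeness (A : Type) (s t : Term A) :
    Subsume (semT s) (semT t) ↔ CMLe s t := by
  constructor
  · rintro ⟨φ⟩
    exact CMProof.complete (CMProof.termSize t) t s le_rfl φ
  · intro h
    exact CMProof.soundness h
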